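/- Let (Ω, m, σ) be ergodic with σ invertible, and suppose τ_{ω,N} : X → ℕ ∪ {∞} and measures μ_{ω} satisfy: (i) μ_ω(τ_{ω,N} > N) = μ_{σω}(X_{σω,N−1,N}) via equivariance, and (ii) the holes satisfy μ_{ω}(H_{ω,N}) = (t_ω + ξ_{ω,N})/N with t ∈ L^∞(m), t_ω > 0, |ξ_{ω,N}| ≤ W, ξ_{ω,N} → 0 a.e. Then for m-a.e. ω, |μ_ω(τ_{ω,N} μ_ω(H_{ω,N}) > t_ω + ξ_{ω,N}) − μ_ω(τ_{ω,N} μ_ω(H_{ω,N}) > t_ω)| → 0 as N → ∞, using the bound that the symmetric difference of the two events is covered by at most ⌈|ξ_{ω,N}| / μ_ω(H_{ω,N})⌉ preimages of holes each of measure at most (‖t‖_∞ + W)/N. -/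

import Mathlib

open MeasureTheory Filter

/-- The cocycle of fiber maps: `iterT σ T n ω = T_{σ^{n-1}ω} ∘ ⋯ ∘ T_{σω} ∘ T_ω`. -/
def iterT {Ω X : Type*} (σ : Ω → Ω) (T : Ω → X → X) : ℕ → Ω → X → X
  | 0, _, x => x
  | n + 1, ω, x => iterT σ T n (σ ω) (T ω x)

lemma iterT_measurable {Ω X : Type*} [MeasurableSpace Ω] [MeasurableSpace X]
    (σ : Ω → Ω) (T : Ω → X → X) (hT : Measurable fun p : Ω × X => T p.1 p.2) :
    ∀ (n : ℕ) (ω : Ω), Measurable (iterT σ T n ω) := by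
  intro n
  induction n with
  | zero => intro ω; exact measurable_id
  | succ n ih =>
      intro ω
      have hTω : Measurable (T ω) := hT.comp measurable_prodMk_left
      exact (ih (σ ω)).comp hTω

lemma iterT_map {Ω X : Type*} [MeasurableSpace Ω] [MeasurableSpace X]
    (σ : Ω → Ω) (T : Ω → X → X) (hT : Measurable fun p : Ω × X => T p.1 p.2)
    (μ : Ω → Measure X) (hequiv : ∀ ω, Measure.map (T ω) (μ ω) = μ (σ ω)) :
    ∀ (n : ℕ) (ω : Ω), Measure.map (iterT σ T n ω) (μ ω) = μ (σ^[n] ω) := by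
  intro n
  induction n with
  | zero => intro ω; simp [iterT, Measure.map_id]
  | succ n ih =>
      intro ω
      have hTω : Measurable (T ω) := hT.comp measurable_prodMk_left
      have : iterT σ T (n + 1) ω = (iterT σ T n (σ ω)) ∘ T ω := rfl
      rw [this, ← Measure.map_map (iterT_measurable σ T hT n (σ ω)) hTω, hequiv ω, ih (σ ω),
        ← Function.iterate_succ_apply]

/-- Threshold-stability of rescaled hitting times: with equivariant measures `μ_ω`, holes
scaling as `μ_ω(H_{ω,N}) = (t_ω + ξ_{ω,N})/N` with `t ∈ L^∞`, `t_ω > 0`, `|ξ_{ω,N}| ≤ W`,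
`ξ_{ω,N} → 0`, the difference of the probabilities that the rescaled first hitting time
`τ_{ω,N} · μ_ω(H_{ω,N})` exceeds `t_ω + ξ_{ω,N}` or exceeds `t_ω` tends to `0` a.e.
(the event `τ·a > s` being encoded as "no hit at any time `j ≥ 1` with `j·a ≤ s`"). -/
theorem stmt18 {Ω X : Type*} [MeasurableSpace Ω] [MeasurableSpace X]
    (m : Measure Ω) [IsProbabilityMeasure m]
    (σ σinv : Ω → Ω) (hσ : Ergodic σ m)
    (hinv1 : Function.LeftInverse σinv σ) (hinv2 : Function.RightInverse σinv σ)
    (T : Ω → X → X) (hT : Measurable fun p : Ω × X => T p.1 p.2)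
    (μ : Ω → Measure X) (hμprob : ∀ ω, IsProbabilityMeasure (μ ω))
    (hequiv : ∀ ω, Measure.map (T ω) (μ ω) = μ (σ ω))
    (H : Ω → ℕ → Set X) (hH : ∀ ω N, MeasurableSet (H ω N))
    (t : Ω → ℝ) (ξ : Ω → ℕ → ℝ) (tb W : ℝ)
    (ht : ∀ᵐ ω ∂m, 0 < t ω ∧ t ω ≤ tb)
    (hξb : ∀ᵐ ω ∂m, ∀ N, |ξ ω N| ≤ W)
    (hξlim : ∀ᵐ ω ∂m, Tendsto (fun N => ξ ω N) atTop (nhds 0))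
    (hscale : ∀ᵐ ω ∂m, ∀ N : ℕ, 1 ≤ N →
      (μ ω (H ω N)).toReal = (t ω + ξ ω N) / N) :
    ∀ᵐ ω ∂m, Tendsto (fun N : ℕ =>
      |(μ ω {x : X | ∀ j : ℕ, 1 ≤ j →
          (j : ℝ) * (μ ω (H ω N)).toReal ≤ t ω + ξ ω N →
          iterT σ T j ω x ∉ H (σ^[j] ω) N}).toReal -
        (μ ω {x : X | ∀ j : ℕ, 1 ≤ j →
          (j : ℝ) * (μ ω (H ω N)).toReal ≤ t ω →
          iterT σ T j ω x ∉ H (σ^[j] ω) N}).toReal|)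
      atTop (nhds 0) := by
  classical
  have hmp : MeasurePreserving σ m m := hσ.toMeasurePreserving
  -- combined pointwise hypothesis
  have hcomb : ∀ᵐ ω ∂m, (0 < t ω ∧ t ω ≤ tb) ∧ (∀ N, |ξ ω N| ≤ W) ∧
      (∀ N : ℕ, 1 ≤ N → (μ ω (H ω N)).toReal = (t ω + ξ ω N) / N) := by
    filter_upwards [ht, hξb, hscale] with ω h1 h2 h3
    exact ⟨h1, h2, h3⟩
  have horb : ∀ᵐ ω ∂m, ∀ j : ℕ, (0 < t (σ^[j] ω) ∧ t (σ^[j] ω) ≤ tb) ∧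
      (∀ N, |ξ (σ^[j] ω) N| ≤ W) ∧
      (∀ N : ℕ, 1 ≤ N →
        (μ (σ^[j] ω) (H (σ^[j] ω) N)).toReal = (t (σ^[j] ω) + ξ (σ^[j] ω) N) / N) := by
    rw [MeasureTheory.ae_all_iff]
    intro j
    exact ((hmp.iterate j).quasiMeasurePreserving.ae hcomb)
  filter_upwards [horb, hξlim] with ω hQ hlim
  have htω : 0 < t ω := by simpa using (hQ 0).1.1
  have hW0 : 0 ≤ W := le_trans (abs_nonneg _) (by simpa using (hQ 0).2.1 0)
  have htbW : 0 < tb + W := by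
    have := (hQ 0).1.2; simp at this; linarith
  -- measure of each pulled-back hole
  have hpull : ∀ (j N : ℕ), 1 ≤ N →
      (μ ω ((iterT σ T j ω) ⁻¹' (H (σ^[j] ω) N))).toReal ≤ (tb + W) / N := by
    intro j N hN
    have hmap : μ ω ((iterT σ T j ω) ⁻¹' (H (σ^[j] ω) N)) =
        μ (σ^[j] ω) (H (σ^[j] ω) N) := by
      rw [← iterT_map σ T hT μ hequiv j ω,
        Measure.map_apply (iterT_measurable σ T hT j ω) (hH _ _)]
    rw [hmap, ((hQ j).2.2 N hN)]
    have h1 : t (σ^[j] ω) ≤ tb := (hQ j).1.2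
    have h2 : ξ (σ^[j] ω) N ≤ W := le_trans (le_abs_self _) ((hQ j).2.1 N)
    have hNpos : (0 : ℝ) < N := by exact_mod_cast hN
    apply div_le_div_of_nonneg_right ?_ hNpos.le |>.trans_eq rfl
    · linarith
  -- the dominating sequence
  set g : ℕ → ℝ := fun N => |ξ ω N| * (tb + W) / (t ω + ξ ω N) + (tb + W) / N with hg_def
  have hglim : Tendsto g atTop (nhds 0) := by
    have h1 : Tendsto (fun N => |ξ ω N| * (tb + W)) atTop (nhds 0) := by
      simpa using (hlim.abs.mul_const (tb + W))
    have h2 : Tendsto (fun N => t ω + ξ ω N) atTop (nhds (t ω)) := by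
      simpa using (tendsto_const_nhds.add hlim)
    have h3 : Tendsto (fun N => |ξ ω N| * (tb + W) / (t ω + ξ ω N)) atTop (nhds 0) := by
      simpa [Pi.div_def] using h1.div h2 (ne_of_gt htω)
    simpa using h3.add (tendsto_const_div_atTop_nhds_zero_nat (tb + W))
  apply squeeze_zero' (Eventually.of_forall fun N => abs_nonneg _) ?_ hglim
  have hev1 : ∀ᶠ N : ℕ in atTop, -t ω < ξ ω N := hlim.eventually_const_lt (by linarith)
  filter_upwards [hev1, eventually_ge_atTop 1] with N hNξ hN1
  -- fixed N: notation
  have hNpos : (0 : ℝ) < N := by exact_mod_cast hN1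
  set a : ℝ := (μ ω (H ω N)).toReal with ha_def
  have ha : a = (t ω + ξ ω N) / N := (hQ 0).2.2 N hN1 |>.trans (by simp)
  have htξ : 0 < t ω + ξ ω N := by linarith
  have hapos : 0 < a := by rw [ha]; positivity
  set s₁ : ℝ := min (t ω) (t ω + ξ ω N) with hs₁
  set s₂ : ℝ := max (t ω) (t ω + ξ ω N) with hs₂
  have hs₁pos : 0 < s₁ := lt_min htω htξ
  have hs₂₁ : s₂ - s₁ = |ξ ω N| := by
    rw [hs₁, hs₂]
    rcases le_or_gt 0 (ξ ω N) with h | h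
    · rw [min_eq_left (by linarith), max_eq_right (by linarith), abs_of_nonneg h]; ring
    · rw [min_eq_right (by linarith), max_eq_left (by linarith), abs_of_neg h]; ring
  set K : Finset ℕ := Finset.Ioc ⌊s₁ / a⌋₊ ⌊s₂ / a⌋₊ with hK
  set U : Set X := ⋃ j ∈ K, (iterT σ T j ω) ⁻¹' (H (σ^[j] ω) N) with hU
  set A : Set X := {x : X | ∀ j : ℕ, 1 ≤ j →
      (j : ℝ) * a ≤ t ω + ξ ω N → iterT σ T j ω x ∉ H (σ^[j] ω) N} with hA
  set B : Set X := {x : X | ∀ j : ℕ, 1 ≤ j →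
      (j : ℝ) * a ≤ t ω → iterT σ T j ω x ∉ H (σ^[j] ω) N} with hB
  -- membership in K for the differing times
  have hmemK : ∀ j : ℕ, 1 ≤ j → s₁ < (j : ℝ) * a → (j : ℝ) * a ≤ s₂ → j ∈ K := by
    intro j hj h1 h2
    rw [hK, Finset.mem_Ioc]
    constructor
    · have hfl : (⌊s₁ / a⌋₊ : ℝ) ≤ s₁ / a := Nat.floor_le (by positivity)
      have : s₁ / a < (j : ℝ) := by rw [div_lt_iff₀ hapos]; linarith
      exact_mod_cast hfl.trans_lt this
    · exact Nat.le_floor (by rw [le_div_iff₀ hapos]; linarith)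
  have hcover : A \ B ⊆ U ∧ B \ A ⊆ U := by
    constructor
    · rintro x ⟨hxA, hxB⟩
      rw [hB] at hxB; simp only [Set.mem_setOf_eq, not_forall] at hxB
      obtain ⟨j, hj1, hjle, hjhit⟩ := hxB
      have hjhit' : iterT σ T j ω x ∈ H (σ^[j] ω) N := not_not.mp hjhit
      have hgt : t ω + ξ ω N < (j : ℝ) * a := by
        by_contra h
        exact hxA j hj1 (not_lt.mp h) hjhit'
      have hjK : j ∈ K := hmemK j hj1 (lt_of_le_of_lt (min_le_right _ _) hgt)
        (hjle.trans (le_max_left _ _))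
      exact Set.mem_biUnion hjK hjhit'
    · rintro x ⟨hxB, hxA⟩
      rw [hA] at hxA; simp only [Set.mem_setOf_eq, not_forall] at hxA
      obtain ⟨j, hj1, hjle, hjhit⟩ := hxA
      have hjhit' : iterT σ T j ω x ∈ H (σ^[j] ω) N := not_not.mp hjhit
      have hgt : t ω < (j : ℝ) * a := by
        by_contra h
        exact hxB j hj1 (not_lt.mp h) hjhit'
      have hjK : j ∈ K := hmemK j hj1 (lt_of_le_of_lt (min_le_left _ _) hgt)
        (hjle.trans (le_max_right _ _))
      exact Set.mem_biUnion hjK hjhit'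
  -- measure of U
  have hUfin : μ ω U ≠ ⊤ := measure_ne_top _ _
  have hUbound : (μ ω U).toReal ≤ (K.card : ℝ) * ((tb + W) / N) := by
    have h1 : μ ω U ≤ ∑ j ∈ K, μ ω ((iterT σ T j ω) ⁻¹' (H (σ^[j] ω) N)) :=
      measure_biUnion_finset_le K _
    have h2 : (μ ω U).toReal ≤
        ∑ j ∈ K, (μ ω ((iterT σ T j ω) ⁻¹' (H (σ^[j] ω) N))).toReal := by
      rw [← ENNReal.toReal_sum (fun j _ => measure_ne_top _ _)]
      exact ENNReal.toReal_mono (by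
        exact (ENNReal.sum_lt_top.mpr (fun j _ => measure_lt_top _ _)).ne) h1
    refine h2.trans ?_
    calc ∑ j ∈ K, (μ ω ((iterT σ T j ω) ⁻¹' (H (σ^[j] ω) N))).toReal
        ≤ ∑ _j ∈ K, (tb + W) / N := Finset.sum_le_sum (fun j _ => hpull j N hN1)
      _ = (K.card : ℝ) * ((tb + W) / N) := by rw [Finset.sum_const, nsmul_eq_mul]
  have hcard : (K.card : ℝ) ≤ (s₂ - s₁) / a + 1 := by
    rw [hK, Nat.card_Ioc]
    rcases le_or_gt ⌊s₁ / a⌋₊ ⌊s₂ / a⌋₊ with h | h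
    · rw [Nat.cast_sub h]
      have hf2 : (⌊s₂ / a⌋₊ : ℝ) ≤ s₂ / a := Nat.floor_le (by positivity)
      have hf1 : s₁ / a < (⌊s₁ / a⌋₊ : ℝ) + 1 := Nat.lt_floor_add_one _
      have : s₂ / a - s₁ / a = (s₂ - s₁) / a := (sub_div _ _ _).symm
      linarith
    · rw [Nat.sub_eq_zero_of_le h.le]
      have : 0 ≤ (s₂ - s₁) / a := by
        apply div_nonneg _ hapos.le
        rw [hs₂₁]; exact abs_nonneg _
      simp; linarith
  -- the difference of measures is bounded by the measure of U
  have hdiff : |(μ ω A).toReal - (μ ω B).toReal| ≤ (μ ω U).toReal := by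
    rw [abs_sub_le_iff]
    constructor
    · have hsub : A ⊆ B ∪ U := by
        intro x hx
        by_cases h : x ∈ B
        · exact Or.inl h
        · exact Or.inr (hcover.1 ⟨hx, h⟩)
      have := (measure_mono hsub).trans (measure_union_le (μ := μ ω) B U)
      have h2 : (μ ω A).toReal ≤ (μ ω B).toReal + (μ ω U).toReal := by
        calc (μ ω A).toReal ≤ (μ ω B + μ ω U).toReal :=
            ENNReal.toReal_mono (ENNReal.add_ne_top.mpr
              ⟨measure_ne_top _ _, measure_ne_top _ _⟩) this
          _ = (μ ω B).toReal + (μ ω U).toReal :=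
            ENNReal.toReal_add (measure_ne_top _ _) (measure_ne_top _ _)
      linarith
    · have hsub : B ⊆ A ∪ U := by
        intro x hx
        by_cases h : x ∈ A
        · exact Or.inl h
        · exact Or.inr (hcover.2 ⟨hx, h⟩)
      have := (measure_mono hsub).trans (measure_union_le (μ := μ ω) A U)
      have h2 : (μ ω B).toReal ≤ (μ ω A).toReal + (μ ω U).toReal := by
        calc (μ ω B).toReal ≤ (μ ω A + μ ω U).toReal :=
            ENNReal.toReal_mono (ENNReal.add_ne_top.mpr
              ⟨measure_ne_top _ _, measure_ne_top _ _⟩) this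
          _ = (μ ω A).toReal + (μ ω U).toReal :=
            ENNReal.toReal_add (measure_ne_top _ _) (measure_ne_top _ _)
      linarith
  -- putting everything together
  have hfinal : ((s₂ - s₁) / a + 1) * ((tb + W) / N) = g N := by
    rw [hs₂₁, ha, hg_def]
    field_simp
  calc |(μ ω A).toReal - (μ ω B).toReal| ≤ (μ ω U).toReal := hdiff
    _ ≤ (K.card : ℝ) * ((tb + W) / N) := hUbound
    _ ≤ ((s₂ - s₁) / a + 1) * ((tb + W) / N) := by
        apply mul_le_mul_of_nonneg_right hcard (by positivity)
    _ = g N := hfinal
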